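/- arXiv:1512.07650 — 2 statements merged into one kernel-verified Lean document; each statement's English description precedes it below -/
import Mathlib

section
/- Let F : ℝ → [0,1] be a CDF with 1 − F(μ* − ε) ≥ g for some g ∈ (0,1], ε > 0, and let 0 < δ < 1. If N ≥ ⌈ln(1/δ)/g⌉ + 1, then the maximum V_N of N i.i.d. samples with CDF F satisfies P(V_N ≤ μ* − ε) < δ. -/
open MeasureTheory ProbabilityTheory

theorem stmt_11 {Ω : Type*} [MeasurableSpace Ω] (P : Measure Ω) [IsProbabilityMeasure P]
    (F : ℝ → ℝ) (μstar ε g δ : ℝ) (hg : 0 < g) (hg1 : g ≤ 1) (hε : 0 < ε)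
    (hδ0 : 0 < δ) (hδ1 : δ < 1)
    (htail : 1 - F (μstar - ε) ≥ g)
    (X : ℕ → Ω → ℝ) (hmeas : ∀ i, Measurable (X i))
    (hindep : iIndepFun X P)
    (hcdf : ∀ i μ, P {ω | X i ω ≤ μ} = ENNReal.ofReal (F μ))
    (N : ℕ) (hN : N ≥ ⌈Real.log (1 / δ) / g⌉₊ + 1) :
    P {ω | (Finset.range N).sup'
          (Finset.nonempty_range_iff.mpr (by omega))
          (fun i => X i ω) ≤ μstar - ε} < ENNReal.ofReal δ := by
  have hNpos : 0 < N := by omega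
  set t := μstar - ε with ht
  have hset : {ω | (Finset.range N).sup'
          (Finset.nonempty_range_iff.mpr (by omega))
          (fun i => X i ω) ≤ t} = ⋂ i ∈ Finset.range N, {ω | X i ω ≤ t} := by
    ext ω
    simp [Finset.sup'_le_iff]
  rw [hset]
  have hprod : P (⋂ i ∈ Finset.range N, {ω | X i ω ≤ t})
      = ∏ i ∈ Finset.range N, P {ω | X i ω ≤ t} := by
    refine hindep.meas_biInter ?_
    intro i _
    exact ⟨Set.Iic t, measurableSet_Iic, rfl⟩
  rw [hprod]
  have hFt : ∀ i ∈ Finset.range N, P {ω | X i ω ≤ t} = ENNReal.ofReal (F t) :=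
    fun i _ => hcdf i t
  rw [Finset.prod_congr rfl hFt, Finset.prod_const, Finset.card_range]
  -- Now show (ofReal (F t))^N < ofReal δ
  have hF_le : F t ≤ 1 - g := by linarith
  have h1g : (0:ℝ) ≤ 1 - g := by linarith
  have hle : (ENNReal.ofReal (F t)) ^ N ≤ ENNReal.ofReal ((1 - g) ^ N) := by
    rw [ENNReal.ofReal_pow h1g]
    exact pow_le_pow_left' (ENNReal.ofReal_le_ofReal hF_le) N
  refine lt_of_le_of_lt hle ?_
  rw [ENNReal.ofReal_lt_ofReal_iff hδ0]
  -- (1-g)^N < δ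
  have hexp : (1 - g) ^ N ≤ Real.exp (-(g * N)) := by
    calc (1 - g) ^ N ≤ (Real.exp (-g)) ^ N := by
          apply pow_le_pow_left₀ h1g
          linarith [Real.add_one_le_exp (-g)]
      _ = Real.exp (-(g * N)) := by
          rw [← Real.exp_nat_mul]; ring_nf
  refine lt_of_le_of_lt hexp ?_
  have hlog : Real.log (1 / δ) / g < N := by
    calc Real.log (1 / δ) / g ≤ (⌈Real.log (1 / δ) / g⌉₊ : ℝ) := Nat.le_ceil _
      _ < N := by exact_mod_cast Nat.lt_of_lt_of_le (Nat.lt_succ_self _) hN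
  have h2 : Real.log (1 / δ) < g * N := by
    rw [div_lt_iff₀ hg] at hlog; linarith
  have : Real.exp (-(g * N)) < Real.exp (Real.log δ) := by
    apply Real.exp_lt_exp.mpr
    rw [Real.log_div one_ne_zero (ne_of_gt hδ0), Real.log_one] at h2
    linarith
  rwa [Real.exp_log hδ0] at this
end

section
/- Let F : ℝ → [0,1] be a CDF with maximal value μ* and tail bound 1 − F(μ* − ε) ≥ G(ε)/K for ε ∈ [0, ε_0], where G is nonnegative on [0, ε_0] and K ≥ 1. Then the probability that the maximum of N = ⌈K·ln(1/δ)/G(ε)⌉ + 1 i.i.d. samples is at most μ* − ε is strictly less than δ, for any ε ∈ (0, ε_0] with G(ε) > 0 and δ ∈ (0, 1). -/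
open MeasureTheory ProbabilityTheory

theorem stmt_18 {Ω : Type*} [MeasurableSpace Ω] (P : Measure Ω) [IsProbabilityMeasure P]
    (F : ℝ → ℝ) (μstar ε₀ : ℝ) (hε₀ : 0 < ε₀) (G : ℝ → ℝ) (K : ℕ) (hK : 1 ≤ K)
    (hGnonneg : ∀ ε, 0 ≤ ε → ε ≤ ε₀ → 0 ≤ G ε)
    (htail : ∀ ε, 0 ≤ ε → ε ≤ ε₀ → 1 - F (μstar - ε) ≥ G ε / K)
    (X : ℕ → Ω → ℝ) (hmeas : ∀ i, Measurable (X i))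
    (hindep : iIndepFun X P)
    (hcdf : ∀ i μ, P {ω | X i ω ≤ μ} = ENNReal.ofReal (F μ))
    (ε δ : ℝ) (hε : 0 < ε) (hεle : ε ≤ ε₀) (hGε : 0 < G ε) (hδ0 : 0 < δ) (hδ1 : δ < 1)
    (N : ℕ) (hN : N = ⌈(K : ℝ) * Real.log (1 / δ) / G ε⌉₊ + 1) :
    P {ω | (Finset.range N).sup'
          (Finset.nonempty_range_iff.mpr (by omega))
          (fun i => X i ω) ≤ μstar - ε} < ENNReal.ofReal δ := by
  set t := μstar - ε with ht
  -- rewrite the event as an intersection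
  have hset : {ω | (Finset.range N).sup'
          (Finset.nonempty_range_iff.mpr (by omega))
          (fun i => X i ω) ≤ t} = ⋂ i ∈ Finset.range N, X i ⁻¹' Set.Iic t := by
    ext ω
    simp [Finset.sup'_le_iff, Set.mem_iInter]
  have hP : P {ω | (Finset.range N).sup'
          (Finset.nonempty_range_iff.mpr (by omega))
          (fun i => X i ω) ≤ t} = ENNReal.ofReal (F t) ^ N := by
    rw [hset, hindep.meas_biInter (fun i _ => ⟨Set.Iic t, measurableSet_Iic, rfl⟩)]
    have : ∀ i, P (X i ⁻¹' Set.Iic t) = ENNReal.ofReal (F t) := by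
      intro i
      have := hcdf i t
      simpa [Set.preimage, Set.Iic] using this
    simp [this]
  rw [hP]
  -- real bound: F t ≤ 1 - G ε / K ≤ exp (-(G ε / K))
  have hKpos : (0:ℝ) < K := by exact_mod_cast hK
  have hFt : F t ≤ 1 - G ε / K := by
    have := htail ε hε.le hεle
    linarith
  have hx : (0:ℝ) < G ε / K := div_pos hGε hKpos
  have hexp : 1 - G ε / K ≤ Real.exp (-(G ε / K)) := by
    have := Real.add_one_le_exp (-(G ε / K))
    linarith
  have hmono : ENNReal.ofReal (F t) ≤ ENNReal.ofReal (Real.exp (-(G ε / K))) :=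
    ENNReal.ofReal_le_ofReal (hFt.trans hexp)
  have hpow : ENNReal.ofReal (F t) ^ N ≤ ENNReal.ofReal (Real.exp (-(G ε / K) * N)) := by
    calc ENNReal.ofReal (F t) ^ N ≤ ENNReal.ofReal (Real.exp (-(G ε / K))) ^ N :=
          pow_le_pow_left' hmono N
      _ = ENNReal.ofReal (Real.exp (-(G ε / K)) ^ N) := by
          rw [ENNReal.ofReal_pow (Real.exp_nonneg _)]
      _ = ENNReal.ofReal (Real.exp (-(G ε / K) * N)) := by
          rw [← Real.exp_nat_mul]; ring_nf
  refine lt_of_le_of_lt hpow ?_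
  rw [ENNReal.ofReal_lt_ofReal_iff hδ0]
  -- show exp(-(G ε / K) * N) < δ
  have hlog : 0 < Real.log (1 / δ) := Real.log_pos (by rw [one_div]; exact (one_lt_inv_iff₀).2 ⟨hδ0, hδ1⟩)
  have ha : (0:ℝ) ≤ (K : ℝ) * Real.log (1 / δ) / G ε :=
    div_nonneg (mul_nonneg hKpos.le hlog.le) hGε.le
  have hNgt : (K : ℝ) * Real.log (1 / δ) / G ε < N := by
    rw [hN]
    push_cast
    have := Nat.le_ceil ((K : ℝ) * Real.log (1 / δ) / G ε)
    linarith
  have hprod : Real.log (1 / δ) < (G ε / K) * N := by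
    have h1 : (K : ℝ) * Real.log (1 / δ) / G ε * (G ε / K) < (N : ℝ) * (G ε / K) :=
      mul_lt_mul_of_pos_right hNgt hx
    have h2 : (K : ℝ) * Real.log (1 / δ) / G ε * (G ε / K) = Real.log (1 / δ) := by
      field_simp
    linarith [h1, h2.symm ▸ h1]
  have : -(G ε / K) * N < Real.log δ := by
    rw [Real.log_div one_ne_zero (ne_of_gt hδ0), Real.log_one] at hprod
    nlinarith
  calc Real.exp (-(G ε / K) * N) < Real.exp (Real.log δ) := Real.exp_lt_exp.2 this
    _ = δ := Real.exp_log hδ0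
end
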